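/- Let S be an idempotent semifield, A ∈ M_n(S) with det_ε(A) ≠ 0, and b a regular n-vector. If (AA⁻)_{ij} ⊗ b_j ≤ b_i for all i, j, then X* = A⁻b is the maximal solution of AX = b: for every solution Y of AY = b, Y ≤ X* componentwise. -/

import Mathlib

/-- An `ε`-function on a semiring `S`. -/
def IsEpsFn {S : Type*} [Semiring S] (ε : S → S) : Prop :=
  Function.Bijective ε ∧ (∀ a : S, ε (ε a) = a) ∧ (∀ a b : S, ε (a + b) = ε a + ε b) ∧
    (∀ a b : S, ε (a * b) = ε a * b) ∧ (∀ a b : S, ε (a * b) = a * ε b)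

/-- The `ε`-determinant: `det_ε A = ⊕_σ ε^{τ(σ)}(∏ i, a_{i σ(i)})`, where only the
parity of the number of inversions `τ(σ)` (i.e. the sign of `σ`) matters since
`ε ∘ ε = id`. -/
def epsDet {S : Type*} [CommSemiring S] (ε : S → S) {n : ℕ}
    (A : Matrix (Fin n) (Fin n) S) : S :=
  ∑ σ : Equiv.Perm (Fin n),
    if Equiv.Perm.sign σ = 1 then ∏ i, A i (σ i) else ε (∏ i, A i (σ i))

/-- The `ε`-adjoint matrix: `adj_ε(A)_{ij} = ε^{(i+j)} det_ε (A(j|i))`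
(for 1-based `i, j`, whose parity agrees with that of `i.val + j.val`). -/
def epsAdj {S : Type*} [CommSemiring S] (ε : S → S) {n : ℕ}
    (A : Matrix (Fin (n + 1)) (Fin (n + 1)) S) : Matrix (Fin (n + 1)) (Fin (n + 1)) S :=
  fun i j =>
    if (i.val + j.val) % 2 = 0 then epsDet ε (A.submatrix j.succAbove i.succAbove)
    else ε (epsDet ε (A.submatrix j.succAbove i.succAbove))

/-- The pseudo-inverse `A⁻ = det_ε(A)⁻¹ • adj_ε(A)` over a semifield. -/
noncomputable def pseudoInv {S : Type*} [Semifield S] (ε : S → S) {n : ℕ}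
    (A : Matrix (Fin (n + 1)) (Fin (n + 1)) S) : Matrix (Fin (n + 1)) (Fin (n + 1)) S :=
  (epsDet ε A)⁻¹ • epsAdj ε A

open Matrix

/-- The permanent of a matrix. -/
def perm' {S : Type*} [CommSemiring S] {n : ℕ} (A : Matrix (Fin n) (Fin n) S) : S :=
  ∑ σ : Equiv.Perm (Fin n), ∏ i, A i (σ i)

lemma perm'_transpose {S : Type*} [CommSemiring S] {n : ℕ} (A : Matrix (Fin n) (Fin n) S) :
    perm' Aᵀ = perm' A := by
  unfold perm'
  refine Fintype.sum_bijective _ inv_involutive.bijective _ _ fun σ => ?_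
  refine Fintype.prod_equiv σ _ _ fun i => ?_
  simp [Matrix.transpose_apply]

/-- Row decomposition map for permutations. -/
noncomputable def rowDecomp {n : ℕ} (i : Fin (n + 1)) :
    Fin (n + 1) × Equiv.Perm (Fin n) → Equiv.Perm (Fin (n + 1)) :=
  fun p => (finSuccEquiv' i).trans ((Equiv.optionCongr p.2).trans (finSuccEquiv' p.1).symm)

lemma rowDecomp_at {n : ℕ} (i : Fin (n + 1)) (p : Fin (n + 1) × Equiv.Perm (Fin n)) :
    rowDecomp i p i = p.1 := by
  simp [rowDecomp, finSuccEquiv'_at, finSuccEquiv'_symm_none]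

lemma rowDecomp_succAbove {n : ℕ} (i : Fin (n + 1)) (p : Fin (n + 1) × Equiv.Perm (Fin n))
    (k : Fin n) : rowDecomp i p (i.succAbove k) = p.1.succAbove (p.2 k) := by
  simp [rowDecomp, finSuccEquiv'_succAbove, finSuccEquiv'_symm_some]

lemma rowDecomp_bijective {n : ℕ} (i : Fin (n + 1)) : Function.Bijective (rowDecomp i) := by
  rw [Fintype.bijective_iff_injective_and_card]
  constructor
  · rintro ⟨j, τ⟩ ⟨j', τ'⟩ h
    have h1 : j = j' := by
      have := congrArg (fun σ : Equiv.Perm (Fin (n+1)) => σ i) h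
      simpa [rowDecomp_at] using this
    have h2 : τ = τ' := by
      apply Equiv.ext
      intro k
      have := congrArg (fun σ : Equiv.Perm (Fin (n+1)) => σ (i.succAbove k)) h
      simp only [rowDecomp_succAbove] at this
      rw [h1] at this
      exact Fin.succAbove_right_injective this
    simp [h1, h2]
  · simp [Fintype.card_prod, Fintype.card_perm, Fintype.card_fin, Nat.factorial_succ]

/-- Expansion of the permanent along row `i`. -/
lemma perm'_succ_row {S : Type*} [CommSemiring S] {n : ℕ}
    (A : Matrix (Fin (n + 1)) (Fin (n + 1)) S) (i : Fin (n + 1)) :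
    perm' A = ∑ j, A i j * perm' (A.submatrix i.succAbove j.succAbove) := by
  unfold perm'
  rw [← Fintype.sum_bijective _ (rowDecomp_bijective i)
      (fun p => ∏ m, A m (rowDecomp i p m)) _ (fun p => rfl)]
  rw [Fintype.sum_prod_type]
  refine Finset.sum_congr rfl fun j _ => ?_
  rw [Finset.mul_sum]
  refine Finset.sum_congr rfl fun τ _ => ?_
  rw [Fin.prod_univ_succAbove (fun m => A m (rowDecomp i (j, τ) m)) i]
  rw [rowDecomp_at]
  congr 1
  refine Finset.prod_congr rfl fun k _ => ?_
  rw [rowDecomp_succAbove, Matrix.submatrix_apply]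

/-- Expansion of the permanent along column `j`. -/
lemma perm'_succ_column {S : Type*} [CommSemiring S] {n : ℕ}
    (A : Matrix (Fin (n + 1)) (Fin (n + 1)) S) (j : Fin (n + 1)) :
    perm' A = ∑ i, A i j * perm' (A.submatrix i.succAbove j.succAbove) := by
  rw [← perm'_transpose A, perm'_succ_row Aᵀ j]
  refine Finset.sum_congr rfl fun i _ => ?_
  rw [Matrix.transpose_apply, ← Matrix.transpose_submatrix, perm'_transpose]

/-- In an additively idempotent semifield every `ε`-function is the identity. -/
lemma eps_eq_id {S : Type*} [Semifield S] (hid : ∀ a : S, a + a = a) (ε : S → S)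
    (hε : IsEpsFn ε) : ∀ a : S, ε a = a := by
  obtain ⟨-, hεε, -, -, hmul⟩ := hε
  have he : ∀ a : S, ε a = a * ε 1 := fun a => by
    have := hmul a 1; rwa [mul_one] at this
  set e := ε 1 with hedef
  have he2 : e * e = 1 := by
    have h := hεε 1
    rwa [he e] at h
  have hu : (1 + e) * (1 + e) = 1 + e := by
    have h : (1 + e) * (1 + e) = (1 + 1) + (e + e) := by
      rw [add_mul, one_mul, mul_add, mul_one, he2]; ring
    rw [h, hid, hid]
  have h0 : (1 : S) + e ≠ 0 := by
    intro h
    have h1 : (1 : S) = 0 := by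
      calc (1:S) = 1 + (1 + e) := by rw [h, add_zero]
        _ = (1 + 1) + e := by rw [add_assoc]
        _ = 1 + e := by rw [hid]
        _ = 0 := h
    exact one_ne_zero h1
  have hu1 : (1 : S) + e = 1 :=
    mul_right_cancel₀ h0 (by rw [hu, one_mul])
  have he1 : e = 1 := by
    calc e = e * (1 + e) := by rw [hu1, mul_one]
      _ = e + e * e := by ring
      _ = e + 1 := by rw [he2]
      _ = 1 := by rw [add_comm, hu1]
  intro a
  rw [he a, he1, mul_one]

lemma epsDet_eq_perm' {S : Type*} [CommSemiring S] {n : ℕ} {ε : S → S}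
    (heps : ∀ a : S, ε a = a) (A : Matrix (Fin n) (Fin n) S) :
    epsDet ε A = perm' A := by
  unfold epsDet perm'
  refine Finset.sum_congr rfl fun σ _ => ?_
  rw [heps, ite_self]

lemma epsAdj_eq_perm' {S : Type*} [CommSemiring S] {n : ℕ} {ε : S → S}
    (heps : ∀ a : S, ε a = a) (A : Matrix (Fin (n + 1)) (Fin (n + 1)) S)
    (i j : Fin (n + 1)) :
    epsAdj ε A i j = perm' (A.submatrix j.succAbove i.succAbove) := by
  unfold epsAdj
  rw [heps, epsDet_eq_perm' heps, ite_self]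

/-- Summing inequalities in an idempotent additive monoid. -/
lemma sum_add_eq_of_forall {S : Type*} [AddCommMonoid S] (hid : ∀ a : S, a + a = a)
    {α : Type*} (s : Finset α) (f : α → S) (c : S) (h : ∀ j ∈ s, f j + c = c) :
    (∑ j ∈ s, f j) + c = c := by
  classical
  induction s using Finset.induction_on with
  | empty => simp
  | insert _ _ hx ih =>
    rename_i a s'
    rw [Finset.sum_insert hx, add_assoc, ih fun j hj => h j (Finset.mem_insert_of_mem hj),
      h a (Finset.mem_insert_self a s')]

/-- If `(AA⁻)_{ij} ⊗ b_j ≤ b_i` for all `i, j`, then `X* = A⁻ b` is the maximal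
solution of `A X = b`: every solution `Y` satisfies `Y ≤ X*` componentwise. -/
theorem stmt_11 {S : Type*} [Semifield S] (hid : ∀ a : S, a + a = a)
    (htot : ∀ a b : S, a + b = b ∨ b + a = a) {n : ℕ} (ε : S → S) (hε : IsEpsFn ε)
    (A : Matrix (Fin (n + 1)) (Fin (n + 1)) S) (hdet : epsDet ε A ≠ 0)
    (b : Fin (n + 1) → S) (hb : ∀ i, b i ≠ 0)
    (hcond : ∀ i j, (A * pseudoInv ε A) i j * b j + b i = b i) :
    A.mulVec ((pseudoInv ε A).mulVec b) = b ∧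
      ∀ Y : Fin (n + 1) → S, A.mulVec Y = b →
        ∀ k, Y k + (pseudoInv ε A).mulVec b k = (pseudoInv ε A).mulVec b k := by
  have heps : ∀ a : S, ε a = a := eps_eq_id hid ε hε
  have hdet' : perm' A ≠ 0 := by rwa [epsDet_eq_perm' heps] at hdet
  -- diagonal of A * A⁻ is 1
  have hABdiag : ∀ i, (A * pseudoInv ε A) i i = 1 := by
    intro i
    rw [pseudoInv, Matrix.mul_smul, Matrix.smul_apply, smul_eq_mul, Matrix.mul_apply]
    have h1 : ∑ j, A i j * epsAdj ε A j i = perm' A := by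
      rw [perm'_succ_row A i]
      exact Finset.sum_congr rfl fun j _ => by rw [epsAdj_eq_perm' heps]
    rw [h1, epsDet_eq_perm' heps, inv_mul_cancel₀ hdet']
  -- diagonal of A⁻ * A is 1
  have hBAdiag : ∀ k, (pseudoInv ε A * A) k k = 1 := by
    intro k
    rw [pseudoInv, Matrix.smul_mul, Matrix.smul_apply, smul_eq_mul, Matrix.mul_apply]
    have h1 : ∑ j, epsAdj ε A k j * A j k = perm' A := by
      rw [perm'_succ_column A k]
      exact Finset.sum_congr rfl fun j _ => by
        rw [epsAdj_eq_perm' heps, mul_comm]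
    rw [h1, epsDet_eq_perm' heps, inv_mul_cancel₀ hdet']
  constructor
  · rw [Matrix.mulVec_mulVec]
    funext i
    show ∑ j, (A * pseudoInv ε A) i j * b j = b i
    set f : Fin (n + 1) → S := fun j => (A * pseudoInv ε A) i j * b j with hf
    have hfii : f i = b i := by rw [hf]; simp only; rw [hABdiag i, one_mul]
    have h1 : (∑ j, f j) + b i = b i :=
      sum_add_eq_of_forall hid _ f (b i) fun j _ => hcond i j
    have h2 : b i + (∑ j, f j) = ∑ j, f j := by
      rw [← Finset.add_sum_erase _ f (Finset.mem_univ i), hfii, ← add_assoc, hid]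
    calc (∑ j, f j) = b i + ∑ j, f j := h2.symm
      _ = (∑ j, f j) + b i := add_comm _ _
      _ = b i := h1
  · intro Y hY k
    have hBb : (pseudoInv ε A).mulVec b = (pseudoInv ε A * A).mulVec Y := by
      rw [← Matrix.mulVec_mulVec, hY]
    rw [hBb]
    show Y k + ∑ l, (pseudoInv ε A * A) k l * Y l = ∑ l, (pseudoInv ε A * A) k l * Y l
    set g : Fin (n + 1) → S := fun l => (pseudoInv ε A * A) k l * Y l with hg
    have hgkk : g k = Y k := by rw [hg]; simp only; rw [hBAdiag k, one_mul]
    rw [← Finset.add_sum_erase _ g (Finset.mem_univ k), hgkk, ← add_assoc, hid]
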